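/- Let K be a number field, h ∈ O_K[[x]] an invertible power series (h(0) = 1) such that some nonzero constant c ∈ O_K satisfies c/h(x) ∈ O_K[[x]], and suppose h(x) = ∏_{i=1}^k (1 − a_i x)^{c_i} with a_i distinct algebraic numbers and c_i ≥ 1. Then each a_i is an algebraic integer. -/

import Mathlib

open Polynomial

/-- Let `K` be a number field and `h ∈ K[x]` with all coefficients in `O_K` and
`h(0) = 1`, such that `c / h(x) ∈ O_K[[x]]` for some nonzero `c ∈ O_K`. If over an
extension `L` one has `h(x) = ∏ (1 − a_i x)^{c_i}` with the `a_i` distinct and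
`c_i ≥ 1`, then each `a_i` is an algebraic integer. -/
theorem roots_of_integral_inverse_denominator (K L : Type*) [Field K] [NumberField K]
    [Field L] [Algebra K L]
    (h : Polynomial K) (hhint : ∀ n : ℕ, IsIntegral ℤ (h.coeff n)) (h0 : h.coeff 0 = 1)
    (c : K) (hc : c ≠ 0) (hcint : IsIntegral ℤ c)
    (hdiv : ∀ n : ℕ, IsIntegral ℤ
      ((PowerSeries.coeff (R := K) n) ((PowerSeries.C (R := K) c) * ((h : PowerSeries K))⁻¹)))
    (k : ℕ) (a : Fin k → L) (ha : Function.Injective a) (e : Fin k → ℕ)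
    (he : ∀ i, 1 ≤ e i)
    (hfact : h.map (algebraMap K L) = ∏ i, (1 - Polynomial.C (a i) * Polynomial.X) ^ e i) :
    ∀ i, IsIntegral ℤ (a i) := by
  intro i
  rcases eq_or_ne (a i) 0 with hz | hz
  · rw [hz]; exact isIntegral_zero
  have hne : h ≠ 0 := fun H => by simp [H] at h0
  -- the reverse of h is monic
  set q := h.reverse with hq
  have hqmonic : q.Monic := by
    have ht : h.natTrailingDegree = 0 := by
      rw [Polynomial.natTrailingDegree_eq_zero]
      right; rw [h0]; exact one_ne_zero
    have : q.leadingCoeff = h.trailingCoeff := Polynomial.reverse_leadingCoeff h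
    rw [Polynomial.Monic, this, Polynomial.trailingCoeff, ht, h0]
  -- coefficients of q are integral over ℤ
  have hqint : ∀ n : ℕ, IsIntegral ℤ (q.coeff n) := by
    intro n
    rw [hq, Polynomial.coeff_reverse]
    exact hhint _
  -- a i is a root of q over L
  have hroot : Polynomial.eval₂ (algebraMap K L) (a i) q = 0 := by
    letI : Invertible ((a i)⁻¹ : L) := ⟨a i, mul_inv_cancel₀ hz, inv_mul_cancel₀ hz⟩
    have hinv : (⅟((a i)⁻¹ : L)) = a i := rfl
    have := (Polynomial.eval₂_reverse_eq_zero_iff (algebraMap K L) ((a i)⁻¹) h).mpr ?_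
    · rwa [hinv] at this
    · rw [← Polynomial.eval_map, hfact]
      rw [Polynomial.eval_prod]
      apply Finset.prod_eq_zero (Finset.mem_univ i)
      rw [Polynomial.eval_pow]
      have : Polynomial.eval ((a i)⁻¹) (1 - Polynomial.C (a i) * Polynomial.X) = 0 := by
        simp [mul_inv_cancel₀ hz]
      rw [this]
      exact zero_pow (Nat.one_le_iff_ne_zero.mp (he i))
  -- lift q to a polynomial over the integral closure of ℤ in K
  set A := integralClosure ℤ K with hA
  have hcoef : (↑q.coeffs : Set K) ⊆ A.toSubring := by
    intro x hx
    obtain ⟨n, _, rfl⟩ := Polynomial.mem_coeffs_iff.mp hx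
    exact hqint n
  set q' := q.toSubring A.toSubring hcoef with hq'
  have hq'monic : q'.Monic := (Polynomial.monic_toSubring q A.toSubring hcoef).mpr hqmonic
  let eRA : (↥(A.toSubring)) →+* ↥A :=
    { toFun := fun x => ⟨x.1, x.2⟩, map_one' := rfl, map_mul' := fun _ _ => rfl,
      map_zero' := rfl, map_add' := fun _ _ => rfl }
  have hint2 : IsIntegral (↥A) (a i) := by
    refine ⟨q'.map eRA, hq'monic.map eRA, ?_⟩
    have hcomp : (algebraMap (↥A) L).comp eRA
        = (algebraMap K L).comp (A.toSubring).subtype := RingHom.ext fun x => rfl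
    rw [Polynomial.eval₂_map, hcomp, ← Polynomial.eval₂_map, Polynomial.map_toSubring]
    exact hroot
  exact isIntegral_trans (a i) hint2
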